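/- If η ∈ ℂ^V satisfies μ_p · ‖η‖_{ℓ^p} < 1, then for every N ≥ 0 the tail of the forward Born series satisfies ‖Σ_{j=N+1}^∞ K_j(η, …, η)‖_{ℓ^p(R×S)} ≤ ν_p · ‖η‖_{ℓ^p}^{N+1} · μ_p^{N} / (1 − μ_p ‖η‖_{ℓ^p}). -/

import Mathlib

open scoped ENNReal

/-- The ℓ^p norm of a finitely indexed family, `p ∈ [1, ∞]`. -/
noncomputable def lpNorm (p : ℝ≥0∞) {ι E : Type*} [Fintype ι] [SeminormedAddCommGroup E]
    (f : ι → E) : ℝ :=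
  if p = ∞ then ⨆ i, ‖f i‖ else (∑ i, ‖f i‖ ^ p.toReal) ^ (1 / p.toReal)

variable {V R S : Type*} [Fintype V] [DecidableEq V] [Fintype R] [Fintype S]

/-- The multilinear forward Born operator: `bornK α0 B G C j` is `K_j`, mapping
`(η_1, …, η_j)` (given as the first `j` values of an `ℕ`-indexed family) to
`(r, s) ↦ (−α0)^j (B D_{η_1} G D_{η_2} G ⋯ G D_{η_j} C)(r, s)`; `K_0 := 0` is junk. -/
noncomputable def bornK (α0 : ℝ) (B : Matrix R V ℂ) (G : Matrix V V ℂ) (C : Matrix V S ℂ) :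
    ℕ → (ℕ → V → ℂ) → R × S → ℂ
  | 0, _ => 0
  | j + 1, η => fun rs =>
      (-(α0 : ℂ)) ^ (j + 1) *
        (B * Matrix.diagonal (η 0) *
          (List.ofFn fun i : Fin j => G * Matrix.diagonal (η (i.1 + 1))).prod * C) rs.1 rs.2

/-- `μ_p = α0 · max_{v ∈ V} ‖row v of G‖_{ℓ^q}` (this depends only on `q`). -/
noncomputable def muConst (α0 : ℝ) (q : ℝ≥0∞) (G : Matrix V V ℂ) : ℝ :=
  α0 * ⨆ v : V, lpNorm q (G v)

/-- `ν_p = α0 · (Σ_{r ∈ R} ‖row r of B‖_q^p)^{1/p} · (Σ_{s ∈ S} ‖column s of C‖_q^p)^{1/p}`,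
with maxima replacing sums when `p = ∞`. -/
noncomputable def nuConst (α0 : ℝ) (p q : ℝ≥0∞) (B : Matrix R V ℂ) (C : Matrix V S ℂ) : ℝ :=
  α0 * lpNorm p (fun r : R => lpNorm q (B r)) * lpNorm p (fun s : S => lpNorm q fun v => C v s)

/-- `C_p = min_{‖η‖_p = 1} ‖K_1 η‖_p`. -/
noncomputable def CpConst (p : ℝ≥0∞) (α0 : ℝ) (B : Matrix R V ℂ) (G : Matrix V V ℂ)
    (C : Matrix V S ℂ) : ℝ :=
  sInf {t : ℝ | ∃ η : V → ℂ, lpNorm p η = 1 ∧ t = lpNorm p (bornK α0 B G C 1 fun _ => η)}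

section Aux

variable {ι E : Type*} [Fintype ι] [SeminormedAddCommGroup E]

lemma lpNorm_nonneg (p : ℝ≥0∞) (f : ι → E) : 0 ≤ lpNorm p f := by
  unfold lpNorm
  split
  · exact Real.iSup_nonneg fun i => norm_nonneg _
  · exact Real.rpow_nonneg
      (Finset.sum_nonneg fun i _ => Real.rpow_nonneg (norm_nonneg _) _) _

lemma toReal_pos_of_one_le {p : ℝ≥0∞} (hp : 1 ≤ p) (hp' : p ≠ ∞) : 0 < p.toReal := by
  have := ENNReal.toReal_mono hp' hp
  rw [ENNReal.toReal_one] at this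
  linarith

lemma lpNorm_eq_norm (p : ℝ≥0∞) [Fact (1 ≤ p)] (f : ι → E) :
    lpNorm p f = ‖(WithLp.equiv p (ι → E)).symm f‖ := by
  rcases eq_or_ne p ∞ with rfl | hp
  · rw [lpNorm, if_pos rfl, PiLp.norm_eq_ciSup]
    simp
  · have ht : 0 < p.toReal := toReal_pos_of_one_le Fact.out hp
    rw [lpNorm, if_neg hp, PiLp.norm_eq_sum ht]
    simp

lemma lpNorm_mono (p : ℝ≥0∞) [Nonempty ι] {f : ι → E} {g : ι → ℝ}
    (h : ∀ i, ‖f i‖ ≤ g i) : lpNorm p f ≤ lpNorm p g := by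
  have hg : ∀ i, ‖f i‖ ≤ ‖g i‖ := fun i => (h i).trans (le_abs_self _)
  unfold lpNorm
  split
  · exact ciSup_le fun i =>
      (hg i).trans (le_ciSup (f := fun i => ‖g i‖)
        (Set.Finite.bddAbove (Set.finite_range _)) i)
  · exact Real.rpow_le_rpow
      (Finset.sum_nonneg fun i _ => Real.rpow_nonneg (norm_nonneg _) _)
      (Finset.sum_le_sum fun i _ =>
        Real.rpow_le_rpow (norm_nonneg _) (hg i) ENNReal.toReal_nonneg)
      (by positivity)

lemma lpNorm_smul (p : ℝ≥0∞) [Fact (1 ≤ p)] (c : ℝ) (f : ι → ℝ) :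
    lpNorm p (c • f) = |c| * lpNorm p f := by
  rw [lpNorm_eq_norm p, lpNorm_eq_norm p, WithLp.equiv_symm_apply, WithLp.toLp_smul, norm_smul,
    Real.norm_eq_abs]

lemma lpNorm_norm (p : ℝ≥0∞) (f : ι → E) : lpNorm p (fun i => ‖f i‖) = lpNorm p f := by
  unfold lpNorm
  simp

lemma norm_apply_le_lpNorm (p : ℝ≥0∞) (hp : 1 ≤ p) (f : ι → E) (i : ι) :
    ‖f i‖ ≤ lpNorm p f := by
  unfold lpNorm
  split
  · exact le_ciSup (f := fun i => ‖f i‖) (Set.Finite.bddAbove (Set.finite_range _)) i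
  · rename_i hp'
    have ht : 0 < p.toReal := toReal_pos_of_one_le hp hp'
    have h1 : ‖f i‖ = (‖f i‖ ^ p.toReal) ^ (1 / p.toReal) := by
      rw [one_div, Real.rpow_rpow_inv (norm_nonneg _) ht.ne']
    rw [h1]
    exact Real.rpow_le_rpow (Real.rpow_nonneg (norm_nonneg _) _)
      (Finset.single_le_sum (fun j _ => Real.rpow_nonneg (norm_nonneg _) _)
        (Finset.mem_univ i)) (by positivity)

lemma conj_toReal {p q : ℝ≥0∞} (hp : 1 ≤ p) (hq : 1 ≤ q) (hpq : 1 / p + 1 / q = 1)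
    (hp' : p ≠ ∞) (hq' : q ≠ ∞) : p.toReal.HolderConjugate q.toReal := by
  have hp0 : p ≠ 0 := (zero_lt_one.trans_le hp).ne'
  have hq0 : q ≠ 0 := (zero_lt_one.trans_le hq).ne'
  have hp1 : p ≠ 1 := by
    rintro rfl
    simp only [one_div, inv_one] at hpq
    have h0 : q⁻¹ = 0 :=
      (ENNReal.add_right_inj (a := 1) ENNReal.one_ne_top).mp (by rw [hpq, add_zero])
    exact hq' (ENNReal.inv_eq_zero.mp h0)
  rw [Real.holderConjugate_iff]
  constructor
  · have : 1 < p := lt_of_le_of_ne hp (Ne.symm hp1)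
    have := (ENNReal.toReal_lt_toReal ENNReal.one_ne_top hp').mpr this
    rwa [ENNReal.toReal_one] at this
  · have h1 : (1 / p).toReal + (1 / q).toReal = 1 := by
      rw [← ENNReal.toReal_add (by simp [hp0]) (by simp [hq0]), hpq, ENNReal.toReal_one]
    simpa [one_div, ENNReal.toReal_inv] using h1

lemma lpNorm_one_eq {ι E : Type*} [Fintype ι] [SeminormedAddCommGroup E] (f : ι → E) :
    lpNorm 1 f = ∑ i, ‖f i‖ := by
  rw [lpNorm, if_neg (show (1:ℝ≥0∞) ≠ ∞ by simp)]
  simp [ENNReal.toReal_one]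

lemma lp_holder {ι : Type*} [Fintype ι] (p q : ℝ≥0∞) (hp : 1 ≤ p) (hq : 1 ≤ q)
    (hpq : 1 / p + 1 / q = 1) (x y : ι → ℂ) :
    ‖∑ i, x i * y i‖ ≤ lpNorm q x * lpNorm p y := by
  have step : ‖∑ i, x i * y i‖ ≤ ∑ i, ‖x i‖ * ‖y i‖ := by
    refine (norm_sum_le _ _).trans (le_of_eq ?_)
    simp [norm_mul]
  refine step.trans ?_
  rcases eq_or_ne q ∞ with rfl | hq'
  · have hp1 : p = 1 := by
      have h : 1 / p = 1 := by simpa using hpq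
      rw [one_div] at h
      exact ENNReal.inv_eq_one.mp h
    subst hp1
    have hinf : ∀ i, ‖x i‖ ≤ lpNorm ∞ x := fun i => norm_apply_le_lpNorm ∞ le_top x i
    calc ∑ i, ‖x i‖ * ‖y i‖ ≤ ∑ i, lpNorm ∞ x * ‖y i‖ :=
          Finset.sum_le_sum fun i _ => mul_le_mul_of_nonneg_right (hinf i) (norm_nonneg _)
      _ = lpNorm ∞ x * ∑ i, ‖y i‖ := by rw [← Finset.mul_sum]
      _ = lpNorm ∞ x * lpNorm 1 y := by rw [lpNorm_one_eq]
  rcases eq_or_ne p ∞ with rfl | hp'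
  · have hq1 : q = 1 := by
      have h : 1 / q = 1 := by simpa using hpq
      rw [one_div] at h
      exact ENNReal.inv_eq_one.mp h
    subst hq1
    have hinf : ∀ i, ‖y i‖ ≤ lpNorm ∞ y := fun i => norm_apply_le_lpNorm ∞ le_top y i
    calc ∑ i, ‖x i‖ * ‖y i‖ ≤ ∑ i, ‖x i‖ * lpNorm ∞ y :=
          Finset.sum_le_sum fun i _ => mul_le_mul_of_nonneg_left (hinf i) (norm_nonneg _)
      _ = (∑ i, ‖x i‖) * lpNorm ∞ y := by rw [← Finset.sum_mul]
      _ = lpNorm 1 x * lpNorm ∞ y := by rw [lpNorm_one_eq]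
  · have hc : q.toReal.HolderConjugate p.toReal :=
      conj_toReal hq hp (by rw [add_comm]; exact hpq) hq' hp'
    have := Real.inner_le_Lp_mul_Lq_of_nonneg (s := Finset.univ) hc
      (f := fun i => ‖x i‖) (g := fun i => ‖y i‖)
      (fun i _ => norm_nonneg _) (fun i _ => norm_nonneg _)
    rw [lpNorm, if_neg hq', lpNorm, if_neg hp']
    exact this

lemma lpNorm_prod_le {R S : Type*} [Fintype R] [Fintype S] [Nonempty R] [Nonempty S]
    (p : ℝ≥0∞) (a : R → ℝ) (b : S → ℝ) (ha : ∀ r, 0 ≤ a r) (hb : ∀ s, 0 ≤ b s) :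
    lpNorm p (fun rs : R × S => a rs.1 * b rs.2) ≤ lpNorm p a * lpNorm p b := by
  unfold lpNorm
  split
  · refine ciSup_le fun rs => ?_
    rw [Real.norm_of_nonneg (mul_nonneg (ha _) (hb _))]
    have h1 : a rs.1 ≤ ⨆ r, ‖a r‖ :=
      (le_abs_self _).trans (le_ciSup (f := fun r => ‖a r‖)
        (Set.Finite.bddAbove (Set.finite_range _)) rs.1)
    have h2 : b rs.2 ≤ ⨆ s, ‖b s‖ :=
      (le_abs_self _).trans (le_ciSup (f := fun s => ‖b s‖)
        (Set.Finite.bddAbove (Set.finite_range _)) rs.2)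
    exact mul_le_mul h1 h2 (hb _) (Real.iSup_nonneg fun r => norm_nonneg _)
  · apply le_of_eq
    have e1 : ∑ rs : R × S, ‖a rs.1 * b rs.2‖ ^ p.toReal
        = (∑ r, ‖a r‖ ^ p.toReal) * (∑ s, ‖b s‖ ^ p.toReal) := by
      rw [Fintype.sum_prod_type, Finset.sum_mul_sum]
      refine Finset.sum_congr rfl fun r _ => Finset.sum_congr rfl fun t _ => ?_
      rw [norm_mul, Real.mul_rpow (norm_nonneg _) (norm_nonneg _)]
    rw [e1, Real.mul_rpow (Finset.sum_nonneg fun i _ => Real.rpow_nonneg (norm_nonneg _) _)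
      (Finset.sum_nonneg fun i _ => Real.rpow_nonneg (norm_nonneg _) _)]

lemma lpNorm_mul_le {ι : Type*} [Fintype ι] [Nonempty ι] (p : ℝ≥0∞) [Fact (1 ≤ p)]
    (x g : ι → ℂ) (M : ℝ) (hM : 0 ≤ M) (hg : ∀ i, ‖g i‖ ≤ M) :
    lpNorm p (fun i => x i * g i) ≤ lpNorm p x * M := by
  have h : ∀ i, ‖x i * g i‖ ≤ (M • fun i => ‖x i‖) i := by
    intro i
    simp only [Pi.smul_apply, smul_eq_mul]
    rw [norm_mul]
    calc ‖x i‖ * ‖g i‖ ≤ ‖x i‖ * M := mul_le_mul_of_nonneg_left (hg i) (norm_nonneg _)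
      _ = M * ‖x i‖ := mul_comm _ _
  calc lpNorm p (fun i => x i * g i) ≤ lpNorm p (M • fun i => ‖x i‖) := lpNorm_mono p h
    _ = |M| * lpNorm p (fun i => ‖x i‖) := lpNorm_smul p M _
    _ = lpNorm p x * M := by rw [abs_of_nonneg hM, lpNorm_norm, mul_comm]

end Aux

set_option maxHeartbeats 1000000 in
lemma bornK_bound [Nonempty V] [Nonempty R] [Nonempty S]
    (p q : ℝ≥0∞) (hp : 1 ≤ p) (hq : 1 ≤ q) (hpq : 1 / p + 1 / q = 1)
    (α0 : ℝ) (hα0 : 0 < α0) (B : Matrix R V ℂ) (G : Matrix V V ℂ) (C : Matrix V S ℂ)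
    (η : V → ℂ) (j : ℕ) :
    lpNorm p (bornK α0 B G C (j + 1) fun _ => η) ≤
      nuConst α0 p q B C * lpNorm p η ^ (j + 1) * muConst α0 q G ^ j := by
  haveI : Fact (1 ≤ p) := ⟨hp⟩
  set γ := ⨆ v : V, lpNorm q (G v) with hγdef
  set h := lpNorm p η with hhdef
  have hγ0 : 0 ≤ γ := Real.iSup_nonneg fun v => lpNorm_nonneg q (G v)
  have hh0 : 0 ≤ h := lpNorm_nonneg p η
  set D := Matrix.diagonal η with hDdef
  have hgbound : ∀ (k : ℕ) (s : S) (v : V),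
      ‖(((G * D) ^ k) * C) v s‖ ≤ (γ * h) ^ k * lpNorm q fun u => C u s := by
    intro k
    induction k with
    | zero =>
      intro s v
      rw [pow_zero, Matrix.one_mul]
      simpa using norm_apply_le_lpNorm q hq (fun u => C u s) v
    | succ k ih =>
      intro s v
      have hrw : (((G * D) ^ (k + 1)) * C) v s
          = ∑ u, G v u * (η u * (((G * D) ^ k) * C) u s) := by
        rw [pow_succ', Matrix.mul_assoc, Matrix.mul_apply]
        refine Finset.sum_congr rfl fun u _ => ?_
        rw [Matrix.mul_diagonal, mul_assoc]
      rw [hrw]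
      have hM : (0:ℝ) ≤ (γ * h) ^ k * lpNorm q fun u => C u s :=
        mul_nonneg (pow_nonneg (mul_nonneg hγ0 hh0) k) (lpNorm_nonneg _ _)
      calc ‖∑ u, G v u * (η u * (((G * D) ^ k) * C) u s)‖
          ≤ lpNorm q (G v) * lpNorm p (fun u => η u * (((G * D) ^ k) * C) u s) :=
            lp_holder p q hp hq hpq _ _
        _ ≤ γ * (h * ((γ * h) ^ k * lpNorm q fun u => C u s)) := by
            refine mul_le_mul
              (le_ciSup (f := fun v => lpNorm q (G v))
                (Set.Finite.bddAbove (Set.finite_range _)) v)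
              (lpNorm_mul_le p η _ _ hM (ih s)) (lpNorm_nonneg _ _) hγ0
        _ = (γ * h) ^ (k + 1) * lpNorm q fun u => C u s := by ring
  have hK : ∀ rs : R × S, ‖bornK α0 B G C (j + 1) (fun _ => η) rs‖ ≤
      ((α0 ^ (j + 1) * h * (γ * h) ^ j) •
        fun rs : R × S => lpNorm q (B rs.1) * lpNorm q fun v => C v rs.2) rs := by
    rintro ⟨r, s⟩
    have hL : (List.ofFn fun _ : Fin j => G * D).prod = (G * D) ^ j := by
      rw [List.ofFn_const, List.prod_replicate]
    have hborn : bornK α0 B G C (j + 1) (fun _ => η) (r, s)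
        = (-(α0 : ℂ)) ^ (j + 1) * (B * D * ((G * D) ^ j) * C) r s := by
      show (-(α0 : ℂ)) ^ (j + 1) *
        (B * D * (List.ofFn fun _ : Fin j => G * D).prod * C) r s = _
      rw [hL]
    have hentry : (B * D * ((G * D) ^ j) * C) r s
        = ∑ v, B r v * (η v * (((G * D) ^ j) * C) v s) := by
      rw [Matrix.mul_assoc, Matrix.mul_assoc, Matrix.mul_apply]
      refine Finset.sum_congr rfl fun v _ => ?_
      rw [Matrix.diagonal_mul]
    have hM : (0:ℝ) ≤ (γ * h) ^ j * lpNorm q fun u => C u s :=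
      mul_nonneg (pow_nonneg (mul_nonneg hγ0 hh0) j) (lpNorm_nonneg _ _)
    have hnc : ‖(-(α0 : ℂ)) ^ (j + 1)‖ = α0 ^ (j + 1) := by
      rw [norm_pow, norm_neg, Complex.norm_real, Real.norm_eq_abs, abs_of_pos hα0]
    calc ‖bornK α0 B G C (j + 1) (fun _ => η) (r, s)‖
        = α0 ^ (j + 1) * ‖∑ v, B r v * (η v * (((G * D) ^ j) * C) v s)‖ := by
          rw [hborn, hentry, norm_mul, hnc]
      _ ≤ α0 ^ (j + 1) *
          (lpNorm q (B r) * lpNorm p (fun v => η v * (((G * D) ^ j) * C) v s)) := by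
          refine mul_le_mul_of_nonneg_left ?_ (pow_nonneg hα0.le _)
          exact lp_holder p q hp hq hpq _ _
      _ ≤ α0 ^ (j + 1) *
          (lpNorm q (B r) * (h * ((γ * h) ^ j * lpNorm q fun u => C u s))) := by
          refine mul_le_mul_of_nonneg_left ?_ (pow_nonneg hα0.le _)
          exact mul_le_mul_of_nonneg_left
            (lpNorm_mul_le p η _ _ hM (hgbound j s)) (lpNorm_nonneg _ _)
      _ = ((α0 ^ (j + 1) * h * (γ * h) ^ j) •
          fun rs : R × S => lpNorm q (B rs.1) * lpNorm q fun v => C v rs.2) (r, s) := by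
          simp only [Pi.smul_apply, smul_eq_mul]
          ring
  have hc0 : (0:ℝ) ≤ α0 ^ (j + 1) * h * (γ * h) ^ j :=
    mul_nonneg (mul_nonneg (pow_nonneg hα0.le _) hh0)
      (pow_nonneg (mul_nonneg hγ0 hh0) _)
  calc lpNorm p (bornK α0 B G C (j + 1) fun _ => η)
      ≤ lpNorm p ((α0 ^ (j + 1) * h * (γ * h) ^ j) •
          fun rs : R × S => lpNorm q (B rs.1) * lpNorm q fun v => C v rs.2) :=
        lpNorm_mono p hK
    _ = |α0 ^ (j + 1) * h * (γ * h) ^ j| *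
          lpNorm p (fun rs : R × S => lpNorm q (B rs.1) * lpNorm q fun v => C v rs.2) :=
        lpNorm_smul p (α0 ^ (j + 1) * h * (γ * h) ^ j)
          (fun rs : R × S => lpNorm q (B rs.1) * lpNorm q fun v => C v rs.2)
    _ ≤ (α0 ^ (j + 1) * h * (γ * h) ^ j) *
          (lpNorm p (fun r : R => lpNorm q (B r)) *
            lpNorm p (fun s : S => lpNorm q fun v => C v s)) := by
        rw [abs_of_nonneg hc0]
        exact mul_le_mul_of_nonneg_left
          (lpNorm_prod_le p (fun r : R => lpNorm q (B r)) (fun s : S => lpNorm q fun v => C v s)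
            (fun r => lpNorm_nonneg _ _) (fun s => lpNorm_nonneg _ _))
          hc0
    _ = nuConst α0 p q B C * h ^ (j + 1) * muConst α0 q G ^ j := by
        rw [nuConst, muConst, ← hγdef]
        ring

/- STATEMENT 4: If `μ_p ‖η‖_p < 1`, then for every `N ≥ 0` the tail of the forward Born
series satisfies
`‖Σ_{j=N+1}^∞ K_j(η, …, η)‖_{ℓ^p(R×S)} ≤ ν_p ‖η‖_p^{N+1} μ_p^N / (1 − μ_p ‖η‖_p)`. -/
theorem forward_born_tail_bound [Nonempty V] [Nonempty R] [Nonempty S]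
    (p q : ℝ≥0∞) (hp : 1 ≤ p) (hq : 1 ≤ q) (hpq : 1 / p + 1 / q = 1)
    (α0 : ℝ) (hα0 : 0 < α0) (B : Matrix R V ℂ) (G : Matrix V V ℂ) (C : Matrix V S ℂ)
    (η : V → ℂ) (hη : muConst α0 q G * lpNorm p η < 1) (N : ℕ) :
    lpNorm p (∑' j : ℕ, bornK α0 B G C (j + N + 1) fun _ => η) ≤
      nuConst α0 p q B C * lpNorm p η ^ (N + 1) * muConst α0 q G ^ N /
        (1 - muConst α0 q G * lpNorm p η) := by
  haveI : Fact (1 ≤ p) := ⟨hp⟩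
  set μ := muConst α0 q G with hμdef
  set ν := nuConst α0 p q B C with hνdef
  set h := lpNorm p η with hhdef
  have hμ0 : 0 ≤ μ := mul_nonneg hα0.le (Real.iSup_nonneg fun v => lpNorm_nonneg q (G v))
  have hν0 : 0 ≤ ν :=
    mul_nonneg (mul_nonneg hα0.le (lpNorm_nonneg _ _)) (lpNorm_nonneg _ _)
  have hh0 : 0 ≤ h := lpNorm_nonneg p η
  have hc0 : 0 ≤ μ * h := mul_nonneg hμ0 hh0
  have hc1 : μ * h < 1 := hη
  set F : ℕ → R × S → ℂ := fun j => bornK α0 B G C (j + N + 1) fun _ => η with hFdef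
  have hFb : ∀ j : ℕ, lpNorm p (F j) ≤ ν * h ^ (N + 1) * μ ^ N * (μ * h) ^ j := by
    intro j
    calc lpNorm p (F j) ≤ ν * h ^ (j + N + 1) * μ ^ (j + N) :=
          bornK_bound p q hp hq hpq α0 hα0 B G C η (j + N)
      _ = ν * h ^ (N + 1) * μ ^ N * (μ * h) ^ j := by ring
  have hgs : Summable (fun j : ℕ => ν * h ^ (N + 1) * μ ^ N * (μ * h) ^ j) :=
    (summable_geometric_of_lt_one hc0 hc1).mul_left _
  set e := PiLp.continuousLinearEquiv p ℂ (fun _ : R × S => ℂ) with hedef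
  have hnorm : ∀ g : R × S → ℂ, ‖e.symm g‖ = lpNorm p g := by
    intro g
    rw [lpNorm_eq_norm p g]
    rfl
  have hnsum : Summable fun j => ‖e.symm (F j)‖ := by
    refine Summable.of_nonneg_of_le (fun j => norm_nonneg _) (fun j => ?_) hgs
    rw [hnorm]
    exact hFb j
  calc lpNorm p (∑' j, F j) = ‖e.symm (∑' j, F j)‖ := (hnorm _).symm
    _ = ‖∑' j, e.symm (F j)‖ := by rw [e.symm.map_tsum]
    _ ≤ ∑' j, ‖e.symm (F j)‖ := norm_tsum_le_tsum_norm hnsum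
    _ ≤ ∑' j, ν * h ^ (N + 1) * μ ^ N * (μ * h) ^ j :=
        Summable.tsum_le_tsum (fun j => by rw [hnorm]; exact hFb j) hnsum hgs
    _ = ν * h ^ (N + 1) * μ ^ N * (1 - μ * h)⁻¹ := by
        rw [tsum_mul_left, tsum_geometric_of_lt_one hc0 hc1]
    _ = ν * h ^ (N + 1) * μ ^ N / (1 - μ * h) := by rw [div_eq_mul_inv]
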